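/- Let g be a function meromorphic on the open unit disk D(0,1) and let h be a function meromorphic on all of ℂ such that h(u) = g(exp(u)) for every u with Re(u) < 0 at which both sides are defined. Then there exists a function G meromorphic on all of ℂ that agrees with g on the punctured disk D(0,1) ∖ {0}; in particular h(u) = G(exp(u)) for all u ∈ ℂ at which both sides are defined. -/

import Mathlib

open Metric

namespace MPD14

open Filter Topology Complex Set

noncomputable def nf (f : ℂ → ℂ) (u : ℂ) : ℂ := limUnder (𝓝[≠] u) f

lemma nf_congr {f g : ℂ → ℂ} {u : ℂ} (h : f =ᶠ[𝓝[≠] u] g) : nf f u = nf g u := by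
  unfold nf limUnder
  rw [Filter.map_congr h]

lemma nf_eq_of_analyticAt {f : ℂ → ℂ} {u : ℂ} (h : AnalyticAt ℂ f u) : nf f u = f u :=
  Filter.Tendsto.limUnder_eq (h.continuousAt.continuousWithinAt)

/-- countability of sets avoided by punctured neighborhoods -/
lemma countable_of_punctured {S : Set ℂ} (h : ∀ x : ℂ, ∀ᶠ y in 𝓝[≠] x, y ∉ S) :
    S.Countable := by
  have key : ∀ n : ℕ, (S ∩ closedBall 0 n).Finite := by
    intro n
    by_contra hinf
    have hinf : (S ∩ closedBall (0:ℂ) n).Infinite := hinf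
    obtain ⟨x, -, hacc⟩ := hinf.exists_accPt_of_subset_isCompact
      (isCompact_closedBall (0:ℂ) n) Set.inter_subset_right
    have h2 : {y | y ∉ S} ∈ 𝓝[≠] x := h x
    have h3 : (𝓝[≠] x ⊓ 𝓟 (S ∩ closedBall 0 n)).NeBot := hacc
    exact absurd (h3.nonempty_of_mem (inter_mem_inf h2 (Filter.mem_principal_self _)))
      (by rintro ⟨y, hy1, hy2, -⟩; exact hy1 hy2)
  have : S = ⋃ n : ℕ, S ∩ closedBall 0 n := by
    ext z; simp only [Set.mem_iUnion, Set.mem_inter_iff, mem_closedBall, dist_zero_right]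
    exact ⟨fun hz => ⟨⌈‖z‖⌉₊, hz, Nat.le_ceil _⟩, fun ⟨n, hz, _⟩ => hz⟩
  rw [this]
  exact Set.countable_iUnion fun n => (key n).countable


/-- exp maps punctured neighborhoods to punctured neighborhoods -/
lemma map_exp_punctured (p : ℂ) : Filter.map Complex.exp (𝓝[≠] p) = 𝓝[≠] (Complex.exp p) := by
  set L : ℂ → ℂ := fun w => p + Complex.log (w / Complex.exp p) with hLdef
  have hep : Complex.exp p ≠ 0 := Complex.exp_ne_zero p
  -- exp ∘ L = id near exp p
  have hL1 : ∀ w : ℂ, w ≠ 0 → Complex.exp (L w) = w := by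
    intro w hw
    rw [hLdef]
    simp only [Complex.exp_add, Complex.exp_log (div_ne_zero hw hep)]
    field_simp
  -- L ∘ exp = id near p
  have hL2 : ∀ᶠ v in 𝓝 p, L (Complex.exp v) = v := by
    have hcont : ContinuousAt (fun v : ℂ => (v - p).im) p := by fun_prop
    have : ∀ᶠ v in 𝓝 p, (v - p).im ∈ Set.Ioo (-Real.pi) Real.pi := by
      apply hcont.eventually_mem
      simp only [sub_self, Complex.zero_im]
      exact Ioo_mem_nhds (by linarith [Real.pi_pos]) Real.pi_pos
    filter_upwards [this] with v hv
    have : Complex.exp v / Complex.exp p = Complex.exp (v - p) := by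
      rw [Complex.exp_sub]
    rw [hLdef]
    simp only [this, Complex.log_exp hv.1 (le_of_lt hv.2)]
    ring
  -- Tendsto exp (𝓝[≠] p) (𝓝[≠] exp p)
  have T1 : Tendsto Complex.exp (𝓝[≠] p) (𝓝[≠] (Complex.exp p)) := by
    rw [tendsto_nhdsWithin_iff]
    constructor
    · exact Complex.continuous_exp.continuousAt.mono_left nhdsWithin_le_nhds
    · filter_upwards [eventually_nhdsWithin_of_eventually_nhds hL2,
        self_mem_nhdsWithin] with v hv (hv2 : v ≠ p)
      intro hc
      apply hv2
      have := congrArg L hc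
      rw [hv] at this
      rw [this, hLdef]
      simp [div_self hep]
  have T2 : Tendsto L (𝓝[≠] (Complex.exp p)) (𝓝[≠] p) := by
    rw [tendsto_nhdsWithin_iff]
    constructor
    · have hc : ContinuousAt L (Complex.exp p) := by
        apply ContinuousAt.add continuousAt_const
        apply ContinuousAt.comp (g := Complex.log)
        · exact continuousAt_clog (by simp [div_self hep, Complex.one_mem_slitPlane])
        · fun_prop
      have hLp : L (Complex.exp p) = p := by
        simp [hLdef, div_self hep]
      have := hc.mono_left (nhdsWithin_le_nhds (s := {Complex.exp p}ᶜ))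
      rwa [hLp] at this
    · filter_upwards [eventually_nhdsWithin_of_eventually_nhds (eventually_ne_nhds hep),
        self_mem_nhdsWithin] with w hw0 (hw : w ≠ Complex.exp p)
      intro hc
      apply hw
      have h2 := congrArg Complex.exp hc
      rw [hL1 w hw0] at h2
      exact h2
  -- conclude by antisymmetry
  apply le_antisymm T1
  have heq : Complex.exp ∘ L =ᶠ[𝓝[≠] (Complex.exp p)] id := by
    filter_upwards [eventually_nhdsWithin_of_eventually_nhds (eventually_ne_nhds hep)] with w hw0
    exact hL1 w hw0
  calc 𝓝[≠] (Complex.exp p) = Filter.map (Complex.exp ∘ L) (𝓝[≠] (Complex.exp p)) := by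
        rw [Filter.map_congr heq, Filter.map_id]
    _ = Filter.map Complex.exp (Filter.map L (𝓝[≠] (Complex.exp p))) := by
        rw [Filter.map_map]
    _ ≤ Filter.map Complex.exp (𝓝[≠] p) := Filter.map_mono T2


lemma analyticAt_dslope_exp (c : ℂ) : AnalyticAt ℂ (dslope Complex.exp c) c := by
  obtain ⟨p, hp⟩ := (analyticAt_cexp (z := c))
  exact ⟨p.fslope, hp.has_fpower_series_dslope_fslope⟩

lemma meromorphicAt_translate {f : ℂ → ℂ} {u c : ℂ} (hf : MeromorphicAt f (u + c)) :
    MeromorphicAt (fun w => f (w + c)) u := by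
  obtain ⟨n, hn⟩ := hf
  refine ⟨n, ?_⟩
  have hf : AnalyticAt ℂ (fun w : ℂ => w + c) u := analyticAt_id.add analyticAt_const
  have h2 : AnalyticAt ℂ ((fun z => (z - (u + c)) ^ n • f z) ∘ (fun w : ℂ => w + c)) u :=
    AnalyticAt.comp (by simpa using hn) hf
  apply h2.congr
  apply Filter.Eventually.of_forall
  intro w
  simp only [Function.comp_apply]
  ring_nf

/-- Meromorphic composition with a local right-inverse of exp. -/
lemma meromorphicAt_comp_log {H : ℂ → ℂ} (hH : ∀ u : ℂ, MeromorphicAt H u)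
    (hper : ∀ (u : ℂ) (k : ℤ), H (u + k * (2 * Real.pi * Complex.I)) = H u)
    {z : ℂ} (hz : z ≠ 0) : MeromorphicAt (fun w => H (Complex.log w)) z := by
  set c := Complex.log z with hc
  have hec : Complex.exp c = z := Complex.exp_log hz
  set L : ℂ → ℂ := fun w => c + Complex.log (w / z) with hLdef
  have hL1 : ∀ w : ℂ, w ≠ 0 → Complex.exp (L w) = w := by
    intro w hw
    rw [hLdef]
    simp only [Complex.exp_add, hec, Complex.exp_log (div_ne_zero hw hz)]
    field_simp
  have hLan : AnalyticAt ℂ L z := by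
    apply analyticAt_const.add
    apply AnalyticAt.comp (g := Complex.log)
    · exact analyticAt_clog (by simp [div_self hz, Complex.one_mem_slitPlane])
    · exact analyticAt_id.div analyticAt_const hz
  have hLz : L z = c := by simp [hLdef, div_self hz]
  -- H ∘ log = H ∘ L away from 0
  have hev : (fun w => H (Complex.log w)) =ᶠ[𝓝[≠] z] (fun w => H (L w)) := by
    filter_upwards [eventually_nhdsWithin_of_eventually_nhds (eventually_ne_nhds hz)] with w hw0
    have : Complex.exp (L w) = Complex.exp (Complex.log w) := by
      rw [hL1 w hw0, Complex.exp_log hw0]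
    obtain ⟨k, hk⟩ := Complex.exp_eq_exp_iff_exists_int.mp this
    rw [hk, hper]
  -- H ∘ L is meromorphic at z
  have hm : MeromorphicAt (fun w => H (L w)) z := by
    obtain ⟨n, hn⟩ := hH c
    refine ⟨n, ?_⟩
    set d := dslope Complex.exp c with hd
    have hdan : AnalyticAt ℂ d c := analyticAt_dslope_exp c
    have hn' : AnalyticAt ℂ (fun u => (u - c) ^ n * H u) c := by
      simpa [smul_eq_mul] using hn
    have hF : AnalyticAt ℂ (fun u => d u ^ n * ((u - c) ^ n * H u)) c :=
      ((hdan.pow n)).mul hn'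
    have hcomp : AnalyticAt ℂ ((fun u => d u ^ n * ((u - c) ^ n * H u)) ∘ L) z := by
      apply AnalyticAt.comp _ hLan
      rw [hLz]; exact hF
    apply hcomp.congr
    filter_upwards [eventually_ne_nhds hz] with w hw0
    have hsub : w - z = (L w - c) * d (L w) := by
      have h3 := sub_smul_dslope Complex.exp c (L w)
      rw [hL1 w hw0, hec] at h3
      simpa [smul_eq_mul, mul_comm] using h3.symm
    simp only [Function.comp_apply, smul_eq_mul]
    rw [hsub]
    ring
  exact hm.congr hev.symm


end MPD14

open MPD14 Filter Topology Set in
/-- Let `g` be meromorphic on the open unit disk and `h` be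
meromorphic on all of `ℂ`, with `h(u) = g(exp u)` for every `u` with `Re u < 0` at
which both sides are defined. Then there is a function `G` meromorphic on all of `ℂ`
agreeing with `g` on the punctured unit disk; in particular `h(u) = G(exp u)` for
all `u ∈ ℂ` at which both sides are defined. -/
theorem meromorphic_pullback_disk_extends
    (g h : ℂ → ℂ)
    (hg : MeromorphicOn g (ball (0 : ℂ) 1))
    (hh : ∀ u : ℂ, MeromorphicAt h u)
    (hgh : ∀ u : ℂ, u.re < 0 → AnalyticAt ℂ h u →
      AnalyticAt ℂ g (Complex.exp u) → h u = g (Complex.exp u)) :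
    ∃ G : ℂ → ℂ,
      (∀ z : ℂ, MeromorphicAt G z) ∧
      (∀ z ∈ ball (0 : ℂ) 1, z ≠ 0 → AnalyticAt ℂ g z → AnalyticAt ℂ G z →
        G z = g z) ∧
      (∀ u : ℂ, AnalyticAt ℂ h u → AnalyticAt ℂ G (Complex.exp u) →
        h u = G (Complex.exp u)) := by
  classical
  set c2 : ℂ := 2 * (Real.pi : ℂ) * Complex.I with hc2
  set H : ℂ → ℂ := fun u => nf h u with hHdef
  have hHev : ∀ u : ℂ, H =ᶠ[𝓝[≠] u] h := by
    intro u
    filter_upwards [(hh u).eventually_analyticAt] with w hw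
    exact nf_eq_of_analyticAt hw
  have hHm : ∀ u : ℂ, MeromorphicAt H u := fun u => (hh u).congr (hHev u).symm
  have hHa : ∀ u : ℂ, AnalyticAt ℂ h u → H u = h u := fun u hu => nf_eq_of_analyticAt hu
  have hball : ∀ p : ℂ, p.re < 0 → Complex.exp p ∈ ball (0 : ℂ) 1 := by
    intro p hp
    simp only [mem_ball, dist_zero_right, Complex.norm_exp]
    exact Real.exp_lt_one_iff.mpr hp
  -- the key identity on the left half plane
  have key : ∀ p : ℂ, p.re < 0 → H p = nf g (Complex.exp p) := by
    intro p hp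
    have e2 : ∀ᶠ w in 𝓝[≠] p, AnalyticAt ℂ g (Complex.exp w) := by
      have := (hg _ (hball p hp)).eventually_analyticAt
      rw [← map_exp_punctured p, eventually_map] at this
      exact this
    have e3 : ∀ᶠ w in 𝓝[≠] p, w.re < 0 := by
      apply eventually_nhdsWithin_of_eventually_nhds
      exact (isOpen_lt Complex.continuous_re continuous_const).eventually_mem hp
    have hev : h =ᶠ[𝓝[≠] p] (g ∘ Complex.exp) := by
      filter_upwards [(hh p).eventually_analyticAt, e2, e3] with w h1 h2 h3
      exact hgh w h3 h1 h2
    have e4 : H p = nf (g ∘ Complex.exp) p := nf_congr hev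
    rw [e4]
    show limUnder (𝓝[≠] p) (g ∘ Complex.exp) = limUnder (𝓝[≠] (Complex.exp p)) g
    unfold limUnder
    rw [← map_exp_punctured p, Filter.map_map]
  -- shifted function
  set Hs : ℂ → ℂ := fun u => H (u + c2) with hHsdef
  have hHsm : ∀ u : ℂ, MeromorphicAt Hs u := fun u => meromorphicAt_translate (hHm (u + c2))
  have hexp2pi : ∀ u : ℂ, Complex.exp (u + c2) = Complex.exp u := by
    intro u
    rw [hc2, Complex.exp_add, Complex.exp_two_pi_mul_I, mul_one]
  have hc2re : c2.re = 0 := by simp [hc2]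
  have hhalf : ∀ u : ℂ, u.re < 0 → H (u + c2) = H u := by
    intro u hu
    have h1 : (u + c2).re < 0 := by rw [Complex.add_re, hc2re, add_zero]; exact hu
    rw [key _ h1, key _ hu, hexp2pi]
  -- identity theorem setup
  set A : Set ℂ := {u : ℂ | AnalyticAt ℂ H u ∧ AnalyticAt ℂ Hs u} with hAdef
  have hSc : (Aᶜ).Countable := by
    have hsub : Aᶜ ⊆ {u | ¬AnalyticAt ℂ H u} ∪ {u | ¬AnalyticAt ℂ Hs u} := by
      intro u hu
      by_contra hcon
      simp only [Set.mem_union, Set.mem_setOf_eq, not_or, not_not] at hcon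
      exact hu ⟨hcon.1, hcon.2⟩
    refine Set.Countable.mono hsub (Set.Countable.union ?_ ?_)
    · apply countable_of_punctured
      intro x
      filter_upwards [(hHm x).eventually_analyticAt] with y hy
      simpa using hy
    · apply countable_of_punctured
      intro x
      filter_upwards [(hHsm x).eventually_analyticAt] with y hy
      simpa using hy
  have hAconn : IsPreconnected A := by
    have h2 : (1 : Cardinal) < Module.rank ℝ ℂ := by
      rw [Complex.rank_real_complex]; exact Cardinal.one_lt_two
    have := (hSc.isConnected_compl_of_one_lt_rank h2)
    rw [compl_compl] at this
    exact this.isPreconnected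
  have hseed : ∃ z₀ : ℂ, z₀ ∈ A ∧ z₀.re < 0 := by
    by_contra hcon
    push_neg at hcon
    have hsub : {z : ℂ | z.re < 0} ⊆ Aᶜ := by
      intro z hz hzA
      exact absurd hz (not_lt.mpr (hcon z hzA))
    have hcnt : ({z : ℂ | z.re < 0}).Countable := hSc.mono hsub
    have hprecnt : ((fun t : ℝ => (-1 : ℂ) + t * Complex.I) ⁻¹' {z : ℂ | z.re < 0}).Countable :=
      hcnt.preimage (by
        intro a b hab
        have := congrArg Complex.im hab
        simpa using this)
    have : (Set.univ : Set ℝ).Countable := by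
      convert hprecnt using 1
      ext t
      simp [Set.mem_preimage]
    exact Cardinal.not_countable_real this
  have hEq : Set.EqOn H Hs A := by
    obtain ⟨z₀, hz₀A, hz₀⟩ := hseed
    apply AnalyticOnNhd.eqOn_of_preconnected_of_frequently_eq
      (fun z hz => hz.1) (fun z hz => hz.2) hAconn hz₀A
    apply Filter.Eventually.frequently
    apply eventually_nhdsWithin_of_eventually_nhds
    filter_upwards [(isOpen_lt Complex.continuous_re continuous_const).eventually_mem hz₀] with w hw
    exact (hhalf w hw).symm
  -- full periodicity
  have hper1 : ∀ u : ℂ, H (u + c2) = H u := by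
    intro u
    have etrans : 𝓝[≠] (u + c2) = Filter.map (fun w => w + c2) (𝓝[≠] u) := by
      have := (Homeomorph.addRight c2).map_punctured_nhds_eq u
      simp only [Homeomorph.coe_addRight] at this
      exact this.symm
    have e1 : H u = nf H u := (nf_congr (hHev u)).symm
    have e2 : H (u + c2) = nf Hs u := by
      show nf h (u + c2) = nf Hs u
      unfold nf limUnder
      rw [etrans, Filter.map_map]
      congr 1
      apply Filter.map_congr
      have h3 := hHev (u + c2)
      rw [etrans] at h3
      rw [Filter.EventuallyEq, eventually_map] at h3
      exact h3.mono fun w hw => hw.symm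
    have e3 : nf H u = nf Hs u := by
      apply nf_congr
      filter_upwards [(hHm u).eventually_analyticAt, (hHsm u).eventually_analyticAt] with w h1 h2
      exact hEq ⟨h1, h2⟩
    rw [e2, ← e3, ← e1]
  have hperZ : ∀ (u : ℂ) (k : ℤ), H (u + k * c2) = H u := by
    intro u k
    induction k using Int.induction_on with
    | zero => simp
    | succ n ih =>
      have e : u + ((n : ℤ) + 1 : ℤ) * c2 = (u + (n : ℤ) * c2) + c2 := by push_cast; ring
      rw [e, hper1, ih]
    | pred n ih =>
      have e : (u + (-(n : ℤ) - 1 : ℤ) * c2) + c2 = u + (-(n : ℤ) : ℤ) * c2 := by push_cast; ring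
      have h4 := hper1 (u + (-(n : ℤ) - 1 : ℤ) * c2)
      rw [e] at h4
      rw [← h4, ih]
  -- the extension
  refine ⟨fun z => if z = 0 then 0 else H (Complex.log z), ?_, ?_, ?_⟩
  · intro z
    by_cases hz : z = 0
    · subst hz
      have hgm : MeromorphicAt g 0 := hg 0 (mem_ball_self one_pos)
      have hnfg : MeromorphicAt (nf g) 0 := by
        apply hgm.congr
        filter_upwards [hgm.eventually_analyticAt] with w hw
        exact (nf_eq_of_analyticAt hw).symm
      apply hnfg.congr
      have hb : ∀ᶠ w in 𝓝[≠] (0 : ℂ), w ∈ ball (0 : ℂ) 1 ∧ w ≠ (0 : ℂ) := by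
        rw [eventually_iff_exists_mem]
        exact ⟨ball 0 1 \ {0}, diff_mem_nhdsWithin_compl (ball_mem_nhds 0 one_pos) _,
          fun w hw => ⟨hw.1, hw.2⟩⟩
      filter_upwards [hb] with w hw
      obtain ⟨hw1, hw0⟩ := hw
      have hre : (Complex.log w).re < 0 := by
        rw [Complex.log_re]
        apply Real.log_neg (norm_pos_iff.mpr hw0)
        simpa [mem_ball, dist_zero_right] using hw1
      have := key _ hre
      rw [Complex.exp_log hw0] at this
      simp only [if_neg hw0]
      exact this.symm
    · have := meromorphicAt_comp_log hHm (by rw [← hc2]; exact hperZ) hz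
      apply this.congr
      filter_upwards [eventually_nhdsWithin_of_eventually_nhds (eventually_ne_nhds hz)] with w hw0
      simp only [if_neg hw0]
  · intro z hzb hz0 hga _
    have hre : (Complex.log z).re < 0 := by
      rw [Complex.log_re]
      apply Real.log_neg (norm_pos_iff.mpr hz0)
      simpa [mem_ball, dist_zero_right] using hzb
    have h5 := key _ hre
    rw [Complex.exp_log hz0] at h5
    beta_reduce
    rw [if_neg hz0, h5, nf_eq_of_analyticAt hga]
  · intro u hhu _
    have hne : Complex.exp u ≠ 0 := Complex.exp_ne_zero u
    beta_reduce
    rw [if_neg hne]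
    have h6 : Complex.exp (Complex.log (Complex.exp u)) = Complex.exp u :=
      Complex.exp_log hne
    obtain ⟨k, hk⟩ := Complex.exp_eq_exp_iff_exists_int.mp h6
    rw [hk]
    have := hperZ u k
    rw [hc2] at this
    rw [this]
    exact (hHa u hhu).symm
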